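/- Let (x, h, y) be an sl₂-triple acting on a finite-dimensional representation E, where y acts nilpotently. For each integer k, define F_k to be the sum of the eigenspaces of h with eigenvalue ≤ k. Then F_k = ∑_{ℓ ≥ 0, k+ℓ+1 ≥ 0} (Ker y^{k+ℓ+1} ∩ Im y^ℓ). In particular, the filtration (F_k) depends only on the nilpotent element y and not on the choice of h completing y to an sl₂-triple. -/

import Mathlib

open Module LinearMap

section sl2aux

variable {E : Type*} [AddCommGroup E] [Module ℂ E]
variable {X H Y : Module.End ℂ E}

/-- The eigenspace of `H` for the integer eigenvalue `c`. -/
noncomputable def Eg (H : Module.End ℂ E) (c : ℤ) : Submodule ℂ E :=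
  Module.End.eigenspace H (c : ℂ)

lemma mem_Eg {c : ℤ} {v : E} : v ∈ Eg H c ↔ H v = (c : ℂ) • v :=
  Module.End.mem_eigenspace_iff

lemma memY (hHY : ⁅H, Y⁆ = (-2 : ℂ) • Y) {c : ℤ} {v : E}
    (hv : v ∈ Eg H c) : Y v ∈ Eg H (c - 2) := by
  rw [mem_Eg] at hv ⊢
  have h := congrArg (fun f : Module.End ℂ E => f v) hHY
  simp only [Ring.lie_def, LinearMap.sub_apply, Module.End.mul_apply,
    LinearMap.smul_apply] at h
  rw [hv, map_smul] at h
  have h2 := sub_eq_iff_eq_add.mp h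
  rw [h2]; push_cast; rw [sub_smul]; module

lemma memX (hHX : ⁅H, X⁆ = (2 : ℂ) • X) {c : ℤ} {v : E}
    (hv : v ∈ Eg H c) : X v ∈ Eg H (c + 2) := by
  rw [mem_Eg] at hv ⊢
  have h := congrArg (fun f : Module.End ℂ E => f v) hHX
  simp only [Ring.lie_def, LinearMap.sub_apply, Module.End.mul_apply,
    LinearMap.smul_apply] at h
  rw [hv, map_smul] at h
  have h2 := sub_eq_iff_eq_add.mp h
  rw [h2]; push_cast; rw [add_smul]; module

lemma memYpow (hHY : ⁅H, Y⁆ = (-2 : ℂ) • Y) :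
    ∀ (s : ℕ) {c : ℤ} {v : E}, v ∈ Eg H c → (Y ^ s) v ∈ Eg H (c - 2 * s) := by
  intro s
  induction s with
  | zero => intro c v hv; simpa using hv
  | succ s ih =>
    intro c v hv
    have h1 : (Y ^ (s + 1)) v = (Y ^ s) (Y v) := by
      rw [pow_succ, Module.End.mul_apply]
    rw [h1]
    have := ih (memY hHY hv)
    convert this using 2
    push_cast; ring

lemma memXpow (hHX : ⁅H, X⁆ = (2 : ℂ) • X) :
    ∀ (r : ℕ) {c : ℤ} {v : E}, v ∈ Eg H c → (X ^ r) v ∈ Eg H (c + 2 * r) := by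
  intro r
  induction r with
  | zero => intro c v hv; simpa using hv
  | succ r ih =>
    intro c v hv
    have h1 : (X ^ (r + 1)) v = (X ^ r) (X v) := by
      rw [pow_succ, Module.End.mul_apply]
    rw [h1]
    have := ih (memX hHX hv)
    convert this using 2
    push_cast; ring

lemma commXY (hXY : ⁅X, Y⁆ = H) (v : E) : X (Y v) = Y (X v) + H v := by
  have h := congrArg (fun f : Module.End ℂ E => f v) hXY
  simp only [Ring.lie_def, LinearMap.sub_apply, Module.End.mul_apply] at h
  rw [← h]; abel

lemma commYX (hXY : ⁅X, Y⁆ = H) (v : E) : Y (X v) = X (Y v) - H v := by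
  rw [commXY hXY v]; abel

lemma commHY (hHY : ⁅H, Y⁆ = (-2 : ℂ) • Y) (v : E) :
    H (Y v) = Y (H v) - (2 : ℂ) • Y v := by
  have h := congrArg (fun f : Module.End ℂ E => f v) hHY
  simp only [Ring.lie_def, LinearMap.sub_apply, Module.End.mul_apply,
    LinearMap.smul_apply] at h
  have := sub_eq_iff_eq_add.mp h
  rw [this]; module

/-- pointwise: `H (Y^t v) = Y^t (H v) - 2t • Y^t v`. -/
lemma commHYpow (hHY : ⁅H, Y⁆ = (-2 : ℂ) • Y) :
    ∀ (t : ℕ) (v : E), H ((Y ^ t) v) = (Y ^ t) (H v) - ((2 * t : ℕ) : ℂ) • (Y ^ t) v := by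
  intro t
  induction t with
  | zero => intro v; simp
  | succ t ih =>
    intro v
    have h1 : ∀ w : E, (Y ^ (t + 1)) w = (Y ^ t) (Y w) := by
      intro w; rw [pow_succ, Module.End.mul_apply]
    rw [h1 v, ih (Y v), commHY hHY v, map_sub, map_smul, ← h1 (H v), ← h1 v]
    have hc : ((2 * (t + 1) : ℕ) : ℂ) = ((2 * t : ℕ) : ℂ) + 2 := by push_cast; ring
    rw [hc, add_smul]
    module

/-- `X ∘ Y^(r+1) = Y^(r+1) ∘ X + (r+1)(c-r) • Y^r` on the eigenspace of weight `c`. -/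
lemma commXYpow (hHY : ⁅H, Y⁆ = (-2 : ℂ) • Y) (hXY : ⁅X, Y⁆ = H) :
    ∀ (r : ℕ) {c : ℤ} {v : E}, v ∈ Eg H c →
      X ((Y ^ (r + 1)) v) = (Y ^ (r + 1)) (X v)
        + ((((r : ℤ) + 1) * (c - r) : ℤ) : ℂ) • (Y ^ r) v := by
  intro r
  induction r with
  | zero =>
    intro c v hv
    rw [pow_one, pow_zero, commXY hXY, mem_Eg.mp hv]
    push_cast
    simp
  | succ r ih =>
    intro c v hv
    have hYv := memY hHY hv
    have h1 : (Y ^ (r + 1 + 1)) v = (Y ^ (r + 1)) (Y v) := by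
      rw [pow_succ Y (r + 1), Module.End.mul_apply]
    have h2 : (Y ^ (r + 1)) (Y (X v)) = (Y ^ (r + 1 + 1)) (X v) := by
      rw [pow_succ Y (r + 1), Module.End.mul_apply]
    have h3 : (Y ^ r) (Y v) = (Y ^ (r + 1)) v := by
      rw [pow_succ Y r, Module.End.mul_apply]
    have hc : ((c : ℂ) + ((((r : ℤ) + 1) * ((c - 2) - r) : ℤ) : ℂ))
        = ((((((r + 1 : ℕ)) : ℤ) + 1) * (c - ((r + 1 : ℕ) : ℤ)) : ℤ) : ℂ) := by
      push_cast; ring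
    calc X ((Y ^ (r + 1 + 1)) v)
        = X ((Y ^ (r + 1)) (Y v)) := by rw [h1]
      _ = (Y ^ (r + 1)) (X (Y v))
            + ((((r : ℤ) + 1) * ((c - 2) - r) : ℤ) : ℂ) • (Y ^ r) (Y v) := ih hYv
      _ = (Y ^ (r + 1)) (Y (X v)) + ((c : ℂ) • (Y ^ (r + 1)) v
            + ((((r : ℤ) + 1) * ((c - 2) - r) : ℤ) : ℂ) • (Y ^ (r + 1)) v) := by
          rw [commXY hXY v, map_add, h3, mem_Eg.mp hv, map_smul, add_assoc]
      _ = (Y ^ (r + 1 + 1)) (X v)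
            + ((((((r + 1 : ℕ)) : ℤ) + 1) * (c - ((r + 1 : ℕ) : ℤ)) : ℤ) : ℂ)
              • (Y ^ (r + 1)) v := by
          rw [h2, ← add_smul, hc]

/-- `Y ∘ X^(r+1) = X^(r+1) ∘ Y - (r+1)(c+r) • X^r` on the eigenspace of weight `c`. -/
lemma commYXpow (hHX : ⁅H, X⁆ = (2 : ℂ) • X) (hXY : ⁅X, Y⁆ = H) :
    ∀ (r : ℕ) {c : ℤ} {v : E}, v ∈ Eg H c →
      Y ((X ^ (r + 1)) v) = (X ^ (r + 1)) (Y v)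
        - ((((r : ℤ) + 1) * (c + r) : ℤ) : ℂ) • (X ^ r) v := by
  intro r
  induction r with
  | zero =>
    intro c v hv
    rw [pow_one, pow_zero, commYX hXY, mem_Eg.mp hv]
    push_cast
    simp
  | succ r ih =>
    intro c v hv
    have hXv := memX hHX hv
    have h1 : (X ^ (r + 1 + 1)) v = (X ^ (r + 1)) (X v) := by
      rw [pow_succ X (r + 1), Module.End.mul_apply]
    have h2 : (X ^ (r + 1)) (X (Y v)) = (X ^ (r + 1 + 1)) (Y v) := by
      rw [pow_succ X (r + 1), Module.End.mul_apply]
    have h3 : (X ^ r) (X v) = (X ^ (r + 1)) v := by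
      rw [pow_succ X r, Module.End.mul_apply]
    have hc : ((c : ℂ) + ((((r : ℤ) + 1) * ((c + 2) + r) : ℤ) : ℂ))
        = ((((((r + 1 : ℕ)) : ℤ) + 1) * (c + ((r + 1 : ℕ) : ℤ)) : ℤ) : ℂ) := by
      push_cast; ring
    calc Y ((X ^ (r + 1 + 1)) v)
        = Y ((X ^ (r + 1)) (X v)) := by rw [h1]
      _ = (X ^ (r + 1)) (Y (X v))
            - ((((r : ℤ) + 1) * ((c + 2) + r) : ℤ) : ℂ) • (X ^ r) (X v) := ih hXv
      _ = (X ^ (r + 1)) (X (Y v)) - ((c : ℂ) • (X ^ (r + 1)) v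
            + ((((r : ℤ) + 1) * ((c + 2) + r) : ℤ) : ℂ) • (X ^ (r + 1)) v) := by
          rw [commYX hXY v, map_sub, h3, mem_Eg.mp hv, map_smul, sub_sub]
      _ = (X ^ (r + 1 + 1)) (Y v)
            - ((((((r + 1 : ℕ)) : ℤ) + 1) * (c + ((r + 1 : ℕ) : ℤ)) : ℤ) : ℂ)
              • (X ^ (r + 1)) v := by
          rw [h2, ← add_smul, hc]

lemma weightsFinite [FiniteDimensional ℂ E] (H : Module.End ℂ E) :
    Set.Finite {c : ℤ | Eg H c ≠ ⊥} := by
  have h1 : {c : ℤ | Eg H c ≠ ⊥} ⊆ (fun c : ℤ => (c : ℂ)) ⁻¹' {μ | H.HasEigenvalue μ} := by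
    intro c hc
    exact hc
  exact Set.Finite.subset
    (Set.Finite.preimage (Set.injOn_of_injective (fun a b => by exact_mod_cast id))
      (Module.End.finite_hasEigenvalue H)) h1

/-- There is a bound `M` such that eigenspaces for integer weights `c` with `|c| > M` vanish. -/
lemma weightsBounded [FiniteDimensional ℂ E] (H : Module.End ℂ E) :
    ∃ M : ℤ, 0 ≤ M ∧ ∀ c : ℤ, M < |c| → Eg H c = ⊥ := by
  obtain ⟨M0, hM0⟩ := (Set.Finite.image (fun c => |c|) (weightsFinite H)).bddAbove
  refine ⟨max 0 M0, le_max_left _ _, fun c hc => ?_⟩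
  by_contra hne
  have h1 : |c| ≤ M0 := hM0 ⟨c, hne, rfl⟩
  have h2 := le_max_right (0 : ℤ) M0
  omega

lemma Xnilpotent [FiniteDimensional ℂ E] (hHX : ⁅H, X⁆ = (2 : ℂ) • X)
    (hsemi : (⨆ j : ℤ, Module.End.eigenspace H (j : ℂ)) = ⊤) :
    ∃ n : ℕ, X ^ n = 0 := by
  obtain ⟨M, hM0, hM⟩ := weightsBounded H
  refine ⟨(2 * M + 1).toNat, ?_⟩
  have key : ∀ (c : ℤ), Eg H c ≤ ker (X ^ (2 * M + 1).toNat) := by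
    intro c v hv
    rcases eq_or_ne v 0 with rfl | hvne
    · simp
    have hc : |c| ≤ M := by
      by_contra hgt
      rw [hM c (by omega)] at hv
      exact hvne hv
    have h2 := memXpow hHX (2 * M + 1).toNat hv
    have h3 : Eg H (c + 2 * ((2 * M + 1).toNat : ℤ)) = ⊥ := by
      apply hM
      have ht : ((2 * M + 1).toNat : ℤ) = 2 * M + 1 := Int.toNat_of_nonneg (by omega)
      rw [ht]
      rw [abs_le] at hc
      rw [lt_abs]
      left
      omega
    rw [LinearMap.mem_ker]
    rw [h3] at h2
    simpa using h2
  have h4 : (⨆ j : ℤ, Module.End.eigenspace H (j : ℂ)) ≤ ker (X ^ (2 * M + 1).toNat) :=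
    iSup_le key
  rw [hsemi, top_le_iff] at h4
  exact LinearMap.ker_eq_top.mp h4

lemma pow_apply_succ (f : Module.End ℂ E) (n : ℕ) (v : E) :
    (f ^ (n + 1)) v = f ((f ^ n) v) := by
  rw [pow_succ', Module.End.mul_apply]

lemma pow_apply_succ' (f : Module.End ℂ E) (n : ℕ) (v : E) :
    (f ^ (n + 1)) v = (f ^ n) (f v) := by
  rw [pow_succ, Module.End.mul_apply]

lemma pow_zero_of_le {a b : ℕ} (h : a ≤ b) {v : E} (hv : (Y ^ a) v = 0) :
    (Y ^ b) v = 0 := by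
  obtain ⟨c, rfl⟩ := Nat.exists_eq_add_of_le h
  rw [add_comm, pow_add, Module.End.mul_apply, hv, map_zero]

/-- If `X v = 0`, `v` has weight `c` and `Y^p v = 0` with `p ≤ c`, then `v = 0`. -/
lemma lem1' (hHY : ⁅H, Y⁆ = (-2 : ℂ) • Y) (hXY : ⁅X, Y⁆ = H) :
    ∀ (p : ℕ) {c : ℤ} {v : E}, v ∈ Eg H c → X v = 0 → (Y ^ p) v = 0 →
      (p : ℤ) ≤ c → v = 0 := by
  intro p
  induction p with
  | zero => intro c v _ _ h0 _; simpa using h0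
  | succ p ih =>
    intro c v hv hXv hYv hpc
    push_cast at hpc
    have key := commXYpow hHY hXY p hv
    rw [hYv, map_zero, hXv, map_zero, zero_add] at key
    have hcoef : ((((p : ℤ) + 1) * (c - p) : ℤ) : ℂ) ≠ 0 := by
      have h1 : (((p : ℤ) + 1) * (c - p) : ℤ) ≠ 0 := by
        have h2 : (0 : ℤ) < ((p : ℤ) + 1) * (c - p) :=
          mul_pos (by omega) (by omega)
        omega
      exact_mod_cast h1
    have hy : (Y ^ p) v = 0 := (smul_eq_zero.mp key.symm).resolve_left hcoef
    exact ih hv hXv hy (by omega)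

lemma lem1aux [FiniteDimensional ℂ E] (hHX : ⁅H, X⁆ = (2 : ℂ) • X)
    (hHY : ⁅H, Y⁆ = (-2 : ℂ) • Y) (hXY : ⁅X, Y⁆ = H) :
    ∀ (n : ℕ) (p : ℕ) {c : ℤ} {v : E}, v ∈ Eg H c → (X ^ n) v = 0 →
      (Y ^ p) v = 0 → (p : ℤ) ≤ c → v = 0 := by
  intro n
  induction n with
  | zero => intro p c v _ h0 _ _; simpa using h0
  | succ n ih =>
    intro p c v hv hXn hYp hpc
    have hXv : X v ∈ Eg H (c + 2) := memX hHX hv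
    have hXnv : (X ^ n) (X v) = 0 := by
      rw [← pow_apply_succ']; exact hXn
    have hYp1v : (Y ^ (p + 1)) v = 0 := by
      rw [pow_apply_succ]; rw [hYp, map_zero]
    have hYXv : (Y ^ (p + 1)) (X v) = 0 := by
      have key := commXYpow hHY hXY p hv
      rw [hYp1v, map_zero, hYp, smul_zero, add_zero] at key
      exact key.symm
    have hXv0 : X v = 0 := ih (p + 1) hXv hXnv hYXv (by push_cast; omega)
    exact lem1' hHY hXY p hv hXv0 hYp hpc

/-- Key injectivity: a weight vector of weight `c` killed by `Y^p` with `p ≤ c` is zero. -/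
lemma lem1 [FiniteDimensional ℂ E] (hHX : ⁅H, X⁆ = (2 : ℂ) • X)
    (hHY : ⁅H, Y⁆ = (-2 : ℂ) • Y) (hXY : ⁅X, Y⁆ = H)
    (hsemi : (⨆ j : ℤ, Module.End.eigenspace H (j : ℂ)) = ⊤)
    (p : ℕ) {c : ℤ} {v : E} (hv : v ∈ Eg H c) (hYp : (Y ^ p) v = 0)
    (hpc : (p : ℤ) ≤ c) : v = 0 := by
  obtain ⟨n, hn⟩ := Xnilpotent hHX hsemi
  exact lem1aux hHX hHY hXY n p hv (by rw [hn]; rfl) hYp hpc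

/-- Dual: if `Y v = 0`, `v` has weight `c` and `X^p v = 0` with `p ≤ -c`, then `v = 0`. -/
lemma dual1' (hHX : ⁅H, X⁆ = (2 : ℂ) • X) (hXY : ⁅X, Y⁆ = H) :
    ∀ (p : ℕ) {c : ℤ} {v : E}, v ∈ Eg H c → Y v = 0 → (X ^ p) v = 0 →
      (p : ℤ) ≤ -c → v = 0 := by
  intro p
  induction p with
  | zero => intro c v _ _ h0 _; simpa using h0
  | succ p ih =>
    intro c v hv hYv hXp hpc
    push_cast at hpc
    have key := commYXpow hHX hXY p hv
    rw [hXp, map_zero, hYv, map_zero, zero_sub] at key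
    have hcoef : ((((p : ℤ) + 1) * (c + p) : ℤ) : ℂ) ≠ 0 := by
      have h1 : (((p : ℤ) + 1) * (c + p) : ℤ) ≠ 0 := by
        have h2 : ((p : ℤ) + 1) * (c + p) < 0 :=
          mul_neg_of_pos_of_neg (by omega) (by omega)
        omega
      exact_mod_cast h1
    have hx : (X ^ p) v = 0 := by
      have := neg_eq_zero.mp key.symm
      exact (smul_eq_zero.mp this).resolve_left hcoef
    exact ih hv hYv hx (by omega)

lemma dual1 (hHX : ⁅H, X⁆ = (2 : ℂ) • X) (hHY : ⁅H, Y⁆ = (-2 : ℂ) • Y)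
    (hXY : ⁅X, Y⁆ = H) (hnil : IsNilpotent Y) :
    ∀ (p : ℕ) {c : ℤ} {v : E}, v ∈ Eg H c → (X ^ p) v = 0 → (p : ℤ) ≤ -c → v = 0 := by
  obtain ⟨N, hN⟩ := hnil
  suffices h : ∀ (n : ℕ) (p : ℕ) {c : ℤ} {v : E}, v ∈ Eg H c → (Y ^ n) v = 0 →
      (X ^ p) v = 0 → (p : ℤ) ≤ -c → v = 0 by
    intro p c v hv hXp hpc
    exact h N p hv (by rw [hN]; rfl) hXp hpc
  intro n
  induction n with
  | zero => intro p c v _ h0 _ _; simpa using h0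
  | succ n ih =>
    intro p c v hv hYn hXp hpc
    have hYv : Y v ∈ Eg H (c - 2) := memY hHY hv
    have hYnv : (Y ^ n) (Y v) = 0 := by
      rw [← pow_apply_succ']; exact hYn
    have hXp1v : (X ^ (p + 1)) v = 0 := by
      rw [pow_apply_succ, hXp, map_zero]
    have hXYv : (X ^ (p + 1)) (Y v) = 0 := by
      have key := commYXpow hHX hXY p hv
      rw [hXp1v, map_zero, hXp, smul_zero, sub_zero] at key
      exact key.symm
    have hYv0 : Y v = 0 := ih (p + 1) hYv hYnv hXYv (by push_cast; omega)
    exact dual1' hHX hXY p hv hYv0 hXp hpc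

/-- `Y^m : E_m → E_{-m}` is surjective. -/
lemma surjY [FiniteDimensional ℂ E] (hHX : ⁅H, X⁆ = (2 : ℂ) • X)
    (hHY : ⁅H, Y⁆ = (-2 : ℂ) • Y) (hXY : ⁅X, Y⁆ = H)
    (hsemi : (⨆ j : ℤ, Module.End.eigenspace H (j : ℂ)) = ⊤)
    (hnil : IsNilpotent Y) (m : ℕ) {v : E} (hv : v ∈ Eg H (-(m : ℤ))) :
    ∃ w ∈ Eg H (m : ℤ), (Y ^ m) w = v := by
  have heY : (m : ℤ) - 2 * (m : ℤ) = -(m : ℤ) := by ring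
  have hmapsY : Set.MapsTo (Y ^ m) (Eg H (m : ℤ)) (Eg H (-(m : ℤ))) := by
    intro w hw
    have h := memYpow hHY m hw
    rwa [heY] at h
  have heX : -(m : ℤ) + 2 * (m : ℤ) = (m : ℤ) := by ring
  have hmapsX : Set.MapsTo (X ^ m) (Eg H (-(m : ℤ))) (Eg H (m : ℤ)) := by
    intro w hw
    have h := memXpow hHX m hw
    rwa [heX] at h
  set f : Eg H (m : ℤ) →ₗ[ℂ] Eg H (-(m : ℤ)) := (Y ^ m).restrict hmapsY with hf
  set g : Eg H (-(m : ℤ)) →ₗ[ℂ] Eg H (m : ℤ) := (X ^ m).restrict hmapsX with hg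
  have hfinj : Function.Injective f := by
    rw [← LinearMap.ker_eq_bot]
    rw [Submodule.eq_bot_iff]
    rintro ⟨w, hw⟩ hker
    have h0 : (Y ^ m) w = 0 := by
      have := congrArg Subtype.val hker
      exact this
    have := lem1 hHX hHY hXY hsemi m hw h0 (le_refl _)
    simp [this]
  have hginj : Function.Injective g := by
    rw [← LinearMap.ker_eq_bot]
    rw [Submodule.eq_bot_iff]
    rintro ⟨w, hw⟩ hker
    have h0 : (X ^ m) w = 0 := by
      have := congrArg Subtype.val hker
      exact this
    have := dual1 hHX hHY hXY hnil m hw h0 (by omega)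
    simp [this]
  have hdim : finrank ℂ (Eg H (m : ℤ)) = finrank ℂ (Eg H (-(m : ℤ))) :=
    le_antisymm (LinearMap.finrank_le_finrank_of_injective hfinj)
      (LinearMap.finrank_le_finrank_of_injective hginj)
  have hfsurj : Function.Surjective f :=
    (LinearMap.injective_iff_surjective_of_finrank_eq_finrank hdim).mp hfinj
  obtain ⟨⟨w, hw⟩, hww⟩ := hfsurj ⟨v, hv⟩
  refine ⟨w, hw, ?_⟩
  have := congrArg Subtype.val hww
  exact this

/-- Components of an eigenvector sum lying in an `H`-invariant submodule are in it. -/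
lemma invariantComponents (K : Submodule ℂ E) (hK : ∀ v ∈ K, H v ∈ K) :
    ∀ (s : Finset ℤ) (w : ℤ → E), (∀ c ∈ s, w c ∈ Eg H c) →
      (∑ c ∈ s, w c) ∈ K → ∀ c ∈ s, w c ∈ K := by
  intro s
  induction s using Finset.induction_on with
  | empty => intro w _ _ c hc; simp at hc
  | @insert a s ha ih =>
    intro w hw hsum c hc
    have hwa : w a ∈ Eg H a := hw a (Finset.mem_insert_self a s)
    have hsum' : w a + ∑ c ∈ s, w c ∈ K := by
      rwa [Finset.sum_insert ha] at hsum
    have hHsum : H (w a + ∑ c ∈ s, w c) - (a : ℂ) • (w a + ∑ c ∈ s, w c) ∈ K :=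
      K.sub_mem (hK _ hsum') (K.smul_mem _ hsum')
    have hexp : H (w a + ∑ c ∈ s, w c) - (a : ℂ) • (w a + ∑ c ∈ s, w c)
        = ∑ c ∈ s, ((c : ℂ) - a) • w c := by
      rw [map_add, map_sum, smul_add, Finset.smul_sum]
      rw [mem_Eg.mp hwa]
      rw [Finset.sum_congr rfl fun c hc => mem_Eg.mp (hw c (Finset.mem_insert_of_mem hc))]
      rw [Finset.sum_congr rfl (fun (c : ℤ) (_ : c ∈ s) => sub_smul (c : ℂ) (a : ℂ) (w c))]
      rw [Finset.sum_sub_distrib]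
      abel
    rw [hexp] at hHsum
    have hwmem : ∀ c ∈ s, ((c : ℂ) - a) • w c ∈ Eg H c := fun c hc =>
      Submodule.smul_mem _ _ (hw c (Finset.mem_insert_of_mem hc))
    have hcomp := ih (fun c => ((c : ℂ) - a) • w c) hwmem hHsum
    have hws : ∀ c ∈ s, w c ∈ K := by
      intro c hc
      have hca : ((c : ℂ) - a) ≠ 0 := by
        have hne : c ≠ a := fun h => ha (h ▸ hc)
        intro h
        apply hne
        have : (c : ℂ) = (a : ℂ) := by linear_combination h
        exact_mod_cast this
      have := K.smul_mem (((c : ℂ) - a)⁻¹) (hcomp c hc)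
      rwa [smul_smul, inv_mul_cancel₀ hca, one_smul] at this
    rcases Finset.mem_insert.mp hc with rfl | hcs
    · have : w c = (w c + ∑ c' ∈ s, w c') - ∑ c' ∈ s, w c' := by abel
      rw [this]
      exact K.sub_mem hsum' (K.sum_mem hws)
    · exact hws c hcs

/-- Every vector decomposes as a finite sum of integer weight vectors. -/
lemma decompose (hsemi : (⨆ j : ℤ, Module.End.eigenspace H (j : ℂ)) = ⊤) (v : E) :
    ∃ (s : Finset ℤ) (w : ℤ → E), (∀ c ∈ s, w c ∈ Eg H c) ∧ v = ∑ c ∈ s, w c := by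
  have hv : v ∈ ⨆ j : ℤ, Module.End.eigenspace H ((j : ℤ) : ℂ) := by
    rw [hsemi]; trivial
  rw [Submodule.mem_iSup_iff_exists_finsupp] at hv
  obtain ⟨f, hf, hsum⟩ := hv
  exact ⟨f.support, f, fun c _ => hf c, by rw [← hsum]; rfl⟩

/-- The filtration defined by the nilpotent element `Y` alone. -/
noncomputable def Gfil (Y : Module.End ℂ E) (k : ℤ) : Submodule ℂ E :=
  ⨆ (ℓ : ℕ) (_ : 0 ≤ k + (ℓ : ℤ) + 1),
    (LinearMap.ker (Y ^ (k + (ℓ : ℤ) + 1).toNat) ⊓ LinearMap.range (Y ^ ℓ))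

lemma mem_Gfil {k : ℤ} (ℓ : ℕ) (hval : 0 ≤ k + (ℓ : ℤ) + 1) {v : E}
    (hker : (Y ^ (k + (ℓ : ℤ) + 1).toNat) v = 0) (hrange : v ∈ LinearMap.range (Y ^ ℓ)) :
    v ∈ Gfil Y k := by
  have hle : (LinearMap.ker (Y ^ (k + (ℓ : ℤ) + 1).toNat) ⊓ LinearMap.range (Y ^ ℓ))
      ≤ Gfil Y k := le_iSup_of_le ℓ (le_iSup_of_le hval le_rfl)
  exact hle ⟨hker, hrange⟩

/-- Applying `Y` pushes the `G`-filtration down by two. -/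
lemma mapYG (k : ℤ) {v : E} (hv : v ∈ Gfil Y (k + 2)) : Y v ∈ Gfil Y k := by
  have hle : Gfil Y (k + 2) ≤ Submodule.comap Y (Gfil Y k) := by
    apply iSup_le
    intro ℓ
    apply iSup_le
    intro hval
    by_cases h2 : 0 ≤ k + (ℓ : ℤ) + 2
    · rintro u ⟨hker, z, hz⟩
      simp only [Submodule.mem_comap]
      apply mem_Gfil (ℓ + 1) (by push_cast; omega)
      · have he : (k + 2 + (ℓ : ℤ) + 1).toNat = (k + ((ℓ : ℕ) + 1 : ℕ) + 1).toNat + 1 := by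
          push_cast; omega
        rw [← pow_apply_succ']
        rw [← he]
        exact hker
      · exact ⟨z, by rw [pow_apply_succ, hz]⟩
    · rintro u ⟨hker, -⟩
      have he : (k + 2 + (ℓ : ℤ) + 1).toNat = 0 := by omega
      rw [he, pow_zero] at hker
      have hu0 : u = 0 := by simpa using hker
      rw [Submodule.mem_comap, hu0, map_zero]
      exact zero_mem _
  exact hle hv

/-- Main inclusion: an eigenspace of weight `j ≤ k` is contained in `Gfil Y k`. -/
lemma mainIncl [FiniteDimensional ℂ E] (hHX : ⁅H, X⁆ = (2 : ℂ) • X)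
    (hHY : ⁅H, Y⁆ = (-2 : ℂ) • Y) (hXY : ⁅X, Y⁆ = H)
    (hsemi : (⨆ j : ℤ, Module.End.eigenspace H (j : ℂ)) = ⊤)
    (hnil : IsNilpotent Y) (T : ℤ) (hT : ∀ c : ℤ, T < c → Eg H c = ⊥) :
    ∀ (n : ℕ) (j k : ℤ), T < j + n → j ≤ k → Eg H j ≤ Gfil Y k := by
  intro n
  induction n with
  | zero =>
    intro j k h hjk
    rw [hT j (by omega)]
    exact bot_le
  | succ n ih =>
    intro j k hTn hjk v hv
    push_cast at hTn
    by_cases hj : 0 ≤ j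
    · -- j ≥ 0 : v = u + Y w with u primitive
      set m : ℕ := (j + 2).toNat with hmdef
      have hm : (m : ℤ) = j + 2 := Int.toNat_of_nonneg (by omega)
      set p : ℕ := (j + 1).toNat with hpdef
      have hp : (p : ℤ) = j + 1 := Int.toNat_of_nonneg (by omega)
      have hmp : m = p + 1 := by omega
      have hYpv : (Y ^ p) v ∈ Eg H (j - 2 * p) := memYpow hHY p hv
      have he : j - 2 * (p : ℤ) = -(m : ℤ) := by omega
      rw [he] at hYpv
      obtain ⟨w, hw, hww⟩ := surjY hHX hHY hXY hsemi hnil m hYpv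
      have hw' : w ∈ Eg H (j + 2) := by rw [← hm]; exact hw
      have hYw : Y w ∈ Eg H j := by
        have := memY hHY hw'
        have he2 : j + 2 - 2 = j := by ring
        rwa [he2] at this
      have hu : v - Y w ∈ Eg H j := sub_mem hv hYw
      have huker : (Y ^ p) (v - Y w) = 0 := by
        rw [map_sub, ← pow_apply_succ', ← hmp, hww, sub_self]
      have huG : v - Y w ∈ Gfil Y k := by
        apply mem_Gfil 0 (by omega)
        · apply pow_zero_of_le (a := p) (by omega) huker
        · exact ⟨v - Y w, by rw [pow_zero]; rfl⟩
      have hwG : w ∈ Gfil Y (k + 2) :=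
        ih (j + 2) (k + 2) (by omega) (by omega) hw'
      have hYwG : Y w ∈ Gfil Y k := mapYG k hwG
      have hdec : v = (v - Y w) + Y w := by abel
      rw [hdec]
      exact add_mem huG hYwG
    · -- j < 0 : v = Y w
      set m : ℕ := (-j).toNat with hmdef
      have hm : (m : ℤ) = -j := Int.toNat_of_nonneg (by omega)
      have hv' : v ∈ Eg H (-(m : ℤ)) := by rw [hm, neg_neg]; exact hv
      obtain ⟨w', hw', hww⟩ := surjY hHX hHY hXY hsemi hnil m hv'
      have hm1 : m = (m - 1) + 1 := by omega
      have hw2 : (Y ^ (m - 1)) w' ∈ Eg H ((m : ℤ) - 2 * ((m - 1 : ℕ) : ℤ)) :=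
        memYpow hHY (m - 1) hw'
      have he2 : (m : ℤ) - 2 * ((m - 1 : ℕ) : ℤ) = j + 2 := by
        have : ((m - 1 : ℕ) : ℤ) = (m : ℤ) - 1 := by omega
        omega
      rw [he2] at hw2
      have hvY : v = Y ((Y ^ (m - 1)) w') := by
        rw [← pow_apply_succ, ← hm1, hww]
      have hwG : (Y ^ (m - 1)) w' ∈ Gfil Y (k + 2) :=
        ih (j + 2) (k + 2) (by omega) (by omega) hw2
      rw [hvY]
      exact mapYG k hwG

end sl2aux

/-- The filtration of a module by sums of eigenspaces of `H` with eigenvalue `≤ k`. -/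
noncomputable def Ffil {E : Type*} [AddCommGroup E] [Module ℂ E]
    (H : Module.End ℂ E) (k : ℤ) : Submodule ℂ E :=
  ⨆ (j : ℤ) (_ : j ≤ k), Module.End.eigenspace H (j : ℂ)

/-- For an `sl₂`-triple `(X, H, Y)` acting on a finite-dimensional module `E`
with `H` semisimple with integer eigenvalues and `Y` nilpotent,
`F_k = ∑_{ℓ ≥ 0, k+ℓ+1 ≥ 0} (Ker Y^{k+ℓ+1} ⊓ Im Y^ℓ)`; in particular the filtration
depends only on `Y`. -/
theorem stmt2 {E : Type*} [AddCommGroup E] [Module ℂ E] [FiniteDimensional ℂ E]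
    (X H Y : Module.End ℂ E)
    (hHX : ⁅H, X⁆ = (2 : ℂ) • X)
    (hHY : ⁅H, Y⁆ = (-2 : ℂ) • Y)
    (hXY : ⁅X, Y⁆ = H)
    (hsemi : (⨆ j : ℤ, Module.End.eigenspace H (j : ℂ)) = ⊤)
    (hnil : IsNilpotent Y) :
    ∀ k : ℤ, Ffil H k =
      ⨆ (ℓ : ℕ) (_ : 0 ≤ k + (ℓ : ℤ) + 1),
        (LinearMap.ker (Y ^ (k + (ℓ : ℤ) + 1).toNat) ⊓ LinearMap.range (Y ^ ℓ)) := by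
  intro k
  show Ffil H k = Gfil Y k
  apply le_antisymm
  · -- Ffil ≤ Gfil
    obtain ⟨M, hM0, hM⟩ := weightsBounded H
    have hT : ∀ c : ℤ, M < c → Eg H c = ⊥ := fun c hc =>
      hM c (lt_of_lt_of_le hc (le_abs_self c))
    show (⨆ (j : ℤ) (_ : j ≤ k), Module.End.eigenspace H (j : ℂ)) ≤ Gfil Y k
    apply iSup_le
    intro j
    apply iSup_le
    intro hjk
    have hn := Int.self_le_toNat (M - j + 1)
    exact mainIncl hHX hHY hXY hsemi hnil M hT (M - j + 1).toNat j k (by omega) hjk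
  · -- Gfil ≤ Ffil
    apply iSup_le
    intro ℓ
    apply iSup_le
    intro hval
    rintro v ⟨hker, w, rfl⟩
    set p : ℕ := (k + (ℓ : ℤ) + 1).toNat with hpdef
    have hp : (p : ℤ) = k + ℓ + 1 := Int.toNat_of_nonneg hval
    obtain ⟨s, wc, hwc, hdw⟩ := decompose hsemi w
    have hwker : (Y ^ (p + ℓ)) w = 0 := by
      rw [pow_add, Module.End.mul_apply]
      exact hker
    have hKinv : ∀ v' ∈ LinearMap.ker (Y ^ (p + ℓ)), H v' ∈ LinearMap.ker (Y ^ (p + ℓ)) := by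
      intro v' hv'
      rw [LinearMap.mem_ker] at hv' ⊢
      have hcomm := commHYpow hHY (p + ℓ) v'
      rw [hv'] at hcomm
      simpa using hcomm.symm
    have hcomps := invariantComponents _ hKinv s wc hwc (by rw [← hdw]; exact hwker)
    rw [hdw, map_sum]
    apply Submodule.sum_mem
    intro c hc
    by_cases hck : c - 2 * (ℓ : ℤ) ≤ k
    · have hmem : (Y ^ ℓ) (wc c) ∈ Eg H (c - 2 * ℓ) := memYpow hHY ℓ (hwc c hc)
      have hle : Module.End.eigenspace H (((c - 2 * (ℓ : ℤ)) : ℤ) : ℂ) ≤ Ffil H k :=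
        le_iSup_of_le (c - 2 * (ℓ : ℤ)) (le_iSup_of_le hck le_rfl)
      exact hle hmem
    · have h0 : wc c = 0 :=
        lem1 hHX hHY hXY hsemi (p + ℓ) (hwc c hc) (hcomps c hc) (by push_cast; omega)
      rw [h0, map_zero]
      exact zero_mem _
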